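/- arXiv:1204.3664 — 2 statements merged into one kernel-verified Lean document; each statement's English description precedes it below -/
import Mathlib

section
/- If z is an element of a unital C*-algebra with ‖z² − z‖ < τ for τ < 1/4, then the spectrum of z is contained in the union of the open disks of radius 1/2 centered at 0 and at 1; in particular 1/2 is not in the spectrum of z. -/
open Metric in
/-- If `z` is an element of a unital C*-algebra with `‖z² − z‖ < τ` for `τ < 1/4`,
then the spectrum of `z` is contained in the union of the open disks of radius `1/2`
centered at `0` and at `1`; in particular `1/2` is not in the spectrum of `z`. -/
theorem stmt3 {A : Type*} [NormedRing A] [StarRing A] [CStarRing A] [CompleteSpace A]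
    [NormedAlgebra ℂ A] [StarModule ℂ A] (z : A) (τ : ℝ) (hτ0 : 0 < τ) (hτ : τ < 1 / 4)
    (hz : ‖z * z - z‖ < τ) :
    spectrum ℂ z ⊆ ball (0 : ℂ) (1 / 2) ∪ ball (1 : ℂ) (1 / 2) ∧
      (1 / 2 : ℂ) ∉ spectrum ℂ z := by
  rcases subsingleton_or_nontrivial A with hA | hA
  · have : spectrum ℂ z = ∅ := by
      ext l; simp [spectrum.mem_iff, isUnit_of_subsingleton]
    simp [this]
  have key : ∀ l ∈ spectrum ℂ z, ‖l * l - l‖ < τ := by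
    intro l hl
    have hmem : l * l - l ∈ spectrum ℂ (z * z - z) := by
      have := spectrum.subset_polynomial_aeval z (Polynomial.X * Polynomial.X - Polynomial.X : Polynomial ℂ) ⟨l, hl, rfl⟩
      simpa using this
    exact lt_of_le_of_lt (spectrum.norm_le_norm_of_mem hmem) hz
  have main : spectrum ℂ z ⊆ ball (0 : ℂ) (1 / 2) ∪ ball (1 : ℂ) (1 / 2) := by
    intro l hl
    by_contra h
    simp only [Set.mem_union, mem_ball, Complex.dist_eq, not_or, not_lt] at h
    obtain ⟨h0, h1⟩ := h
    have : ‖l * l - l‖ = ‖l‖ * ‖l - 1‖ := by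
      rw [← norm_mul]; ring_nf
    have hge : (1 / 4 : ℝ) ≤ ‖l * l - l‖ := by
      rw [this]
      calc (1/4 : ℝ) = (1/2) * (1/2) := by norm_num
        _ ≤ ‖l‖ * ‖l - 1‖ := by
            apply mul_le_mul (by simpa using h0) (by simpa using h1) (by norm_num)
              (norm_nonneg _)
    have := key l hl
    linarith
  refine ⟨main, fun hmem => ?_⟩
  have := main hmem
  simp only [Set.mem_union, mem_ball, Complex.dist_eq] at this
  rcases this with h | h
  · norm_num [Complex.norm_def, Complex.normSq] at h
  · rw [show ((1:ℂ)/2 - 1) = -(1/2) by ring] at h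
    norm_num [Complex.norm_def, Complex.normSq] at h
end

section
/- Let p, q be idempotents in a unital ring B with p − q ∈ I for a two-sided ideal I. Define E₀(p,q) = Z(q)⁻¹ · diag(p, 1−q, 0, 0) · Z(q) with Z(q) as above. Then E₀(p,q) = [[1 + q(p−q)q, 0, qp(p−q), 0],[0,0,0,0],[(p−q)pq, 0, (1−q)(p−q)(1−q), 0],[0,0,0,0]]; in particular E₀(p,q) is an idempotent and E₀(p,q) − diag(1,0,0,0) ∈ M₄(I). -/
open Matrix

set_option maxHeartbeats 1600000 in
/-- Difference construction: for idempotents `p, q` in a unital ring `B` with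
`p − q ∈ I`, the element `E₀(p,q) = Z(q)⁻¹·diag(p,1−q,0,0)·Z(q)` equals the explicit
matrix below; in particular it is an idempotent and
`E₀(p,q) − diag(1,0,0,0) ∈ M₄(I)`. -/
theorem stmt7 {B : Type*} [Ring B] (I : TwoSidedIdeal B) (p q : B)
    (hp : p * p = p) (hq : q * q = q) (hpq : p - q ∈ I)
    (Z Zinv E₀ : Matrix (Fin 4) (Fin 4) B)
    (hZ : Z = !![q, 0, 1 - q, 0; 1 - q, 0, 0, q; 0, 0, q, 1 - q; 0, 1, 0, 0])
    (hZinv : Zinv = !![q, 1 - q, 0, 0; 0, 0, 0, 1; 1 - q, 0, q, 0; 0, q, 1 - q, 0])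
    (hE : E₀ = Zinv * !![p, 0, 0, 0; 0, 1 - q, 0, 0; 0, 0, 0, 0; 0, 0, 0, 0] * Z) :
    E₀ = !![1 + q * (p - q) * q, 0, q * p * (p - q), 0;
            0, 0, 0, 0;
            (p - q) * p * q, 0, (1 - q) * (p - q) * (1 - q), 0;
            0, 0, 0, 0] ∧
      E₀ * E₀ = E₀ ∧
      (∀ i j : Fin 4,
        ((E₀ - !![1, 0, 0, 0; 0, 0, 0, 0; 0, 0, 0, 0; 0, 0, 0, 0] :
          Matrix (Fin 4) (Fin 4) B)) i j ∈ I) := by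
  have hq' : ∀ x : B, q * (q * x) = q * x := fun x => by rw [← mul_assoc, hq]
  have hp' : ∀ x : B, p * (p * x) = p * x := fun x => by rw [← mul_assoc, hp]
  have hform : E₀ = !![1 + q * (p - q) * q, 0, q * p * (p - q), 0;
            0, 0, 0, 0;
            (p - q) * p * q, 0, (1 - q) * (p - q) * (1 - q), 0;
            0, 0, 0, 0] := by
    subst hZ hZinv hE
    ext i j
    fin_cases i <;> fin_cases j <;>
      simp [Matrix.mul_apply, Fin.sum_univ_four, mul_sub, sub_mul, mul_assoc,
        hp, hq, hp', hq', Matrix.vecHead, Matrix.vecTail] <;> abel_nf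
  have hZZ : Z * Zinv = 1 := by
    subst hZ hZinv
    ext i j
    fin_cases i <;> fin_cases j <;>
      simp [Matrix.mul_apply, Fin.sum_univ_four, Matrix.one_apply, mul_sub, sub_mul,
        hq, Matrix.vecHead, Matrix.vecTail] <;> abel_nf
  have hDD : (!![p, 0, 0, 0; 0, 1 - q, 0, 0; 0, 0, 0, 0; 0, 0, 0, 0] :
      Matrix (Fin 4) (Fin 4) B) * !![p, 0, 0, 0; 0, 1 - q, 0, 0; 0, 0, 0, 0; 0, 0, 0, 0]
      = !![p, 0, 0, 0; 0, 1 - q, 0, 0; 0, 0, 0, 0; 0, 0, 0, 0] := by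
    ext i j
    fin_cases i <;> fin_cases j <;>
      simp [Matrix.mul_apply, Fin.sum_univ_four, mul_sub, sub_mul, hp, hq, Matrix.vecHead, Matrix.vecTail] <;> abel_nf
  refine ⟨hform, ?_, ?_⟩
  · rw [hE]
    calc Zinv * !![p, 0, 0, 0; 0, 1 - q, 0, 0; 0, 0, 0, 0; 0, 0, 0, 0] * Z *
          (Zinv * !![p, 0, 0, 0; 0, 1 - q, 0, 0; 0, 0, 0, 0; 0, 0, 0, 0] * Z)
        = Zinv * (!![p, 0, 0, 0; 0, 1 - q, 0, 0; 0, 0, 0, 0; 0, 0, 0, 0] * (Z * Zinv) *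
            !![p, 0, 0, 0; 0, 1 - q, 0, 0; 0, 0, 0, 0; 0, 0, 0, 0]) * Z := by
          noncomm_ring
      _ = _ := by rw [hZZ, mul_one, hDD]
  · intro i j
    rw [hform]
    fin_cases i <;> fin_cases j <;> simp [Matrix.vecHead, Matrix.vecTail] <;>
      first
        | exact I.zero_mem
        | exact I.mul_mem_right _ _ (I.mul_mem_left _ _ hpq)
        | exact I.mul_mem_left _ _ hpq
        | exact I.mul_mem_right _ _ hpq
        | exact I.mul_mem_right _ _ (I.mul_mem_right _ _ hpq)
        | exact I.mul_mem_left _ _ (I.mul_mem_left _ _ hpq)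
end
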